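/- arXiv:0907.3321 — 2 statements merged into one kernel-verified Lean document; each statement's English description precedes it below -/
import Mathlib

section
/- Fix 0 < α < 1 and Δ ≥ 0, and define f_Δ : ℝ → ℝ by f_Δ(x) = x^{-α}|log x|^Δ for x ∈ (0, 1/e) and f_Δ(x) = 0 otherwise. Then f_Δ ∈ L^p(ℝ) for all p ∈ [1, 1/α), and there exist constants 0 < c ≤ C (depending on α, Δ) such that c (1/α - p)^{-Δ-α} ≤ ‖f_Δ‖_p ≤ C (1/α - p)^{-Δ-α} for all p in a left neighbourhood of 1/α. -/
open MeasureTheory Real Set Filter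

noncomputable def fDelta (α Δ : ℝ) (x : ℝ) : ℝ :=
  if x ∈ Set.Ioo 0 (Real.exp 1)⁻¹ then x ^ (-α) * |Real.log x| ^ Δ else 0

lemma fd_image_exp_neg : (fun y : ℝ => Real.exp (-y)) '' Set.Ioi 1 = Set.Ioo 0 (Real.exp 1)⁻¹ := by
  ext x
  constructor
  · rintro ⟨y, hy, rfl⟩
    refine ⟨Real.exp_pos _, ?_⟩
    rw [← Real.exp_neg]
    exact Real.exp_lt_exp.mpr (by simpa using hy)
  · rintro ⟨hx0, hx1⟩
    refine ⟨-Real.log x, ?_, by simp [Real.exp_log hx0]⟩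
    have : Real.log x < -1 := by
      rw [← Real.log_exp (-1)]
      exact Real.log_lt_log hx0 (by rwa [Real.exp_neg])
    simp only [Set.mem_Ioi]; linarith

lemma fd_injOn : Set.InjOn (fun y : ℝ => Real.exp (-y)) (Set.Ioi 1) :=
  fun _ _ _ _ h => neg_injective (Real.exp_injective h)

lemma fd_deriv : ∀ y ∈ Set.Ioi (1:ℝ), HasDerivWithinAt (fun y : ℝ => Real.exp (-y))
    (-Real.exp (-y)) (Set.Ioi 1) y := by
  intro y _
  have h : HasDerivAt (fun y : ℝ => Real.exp (-y)) (Real.exp (-y) * (-1)) y :=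
    (hasDerivAt_neg y).exp
  simpa using h.hasDerivWithinAt

lemma fd_integrand_eq (a D y : ℝ) :
    |(-Real.exp (-y))| • ((Real.exp (-y)) ^ (-a) * (-Real.log (Real.exp (-y))) ^ D)
      = y ^ D * Real.exp (-(1 - a) * y) := by
  rw [smul_eq_mul, abs_neg, Real.abs_exp, Real.log_exp, neg_neg,
    Real.rpow_def_of_pos (Real.exp_pos _), Real.log_exp, ← mul_assoc, ← Real.exp_add,
    show -y + -y * -a = -(1-a)*y by ring, mul_comm]

lemma fd_int_Ioi0 {D b : ℝ} (hD : -1 < D) (hb : 0 < b) :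
    IntegrableOn (fun y : ℝ => y ^ D * Real.exp (-b * y)) (Set.Ioi 0) := by
  have h := integrableOn_rpow_mul_exp_neg_mul_rpow (p := 1) (s := D) (b := b) hD one_pos hb
  simpa [Real.rpow_one] using h

lemma fd_integrableOn_Ioi {a D : ℝ} (ha : a < 1) (hD : -1 < D) :
    IntegrableOn (fun y : ℝ => y ^ D * Real.exp (-(1 - a) * y)) (Set.Ioi 1) :=
  (fd_int_Ioi0 hD (by linarith)).mono_set (Set.Ioi_subset_Ioi zero_le_one)

lemma fd_integrableOn_core {a D : ℝ} (ha : a < 1) (hD : -1 < D) :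
    IntegrableOn (fun x : ℝ => x ^ (-a) * (-Real.log x) ^ D)
      (Set.Ioo 0 (Real.exp 1)⁻¹) := by
  rw [← fd_image_exp_neg,
    integrableOn_image_iff_integrableOn_abs_deriv_smul measurableSet_Ioi fd_deriv fd_injOn]
  refine (fd_integrableOn_Ioi ha hD).congr_fun (fun y _ => ?_) measurableSet_Ioi
  exact (fd_integrand_eq a D y).symm

lemma fd_integral_core (a D : ℝ) :
    (∫ x in Set.Ioo 0 (Real.exp 1)⁻¹, x ^ (-a) * (-Real.log x) ^ D) =
      ∫ y in Set.Ioi 1, y ^ D * Real.exp (-(1 - a) * y) := by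
  rw [← fd_image_exp_neg,
    integral_image_eq_integral_abs_deriv_smul measurableSet_Ioi fd_deriv fd_injOn]
  exact setIntegral_congr_fun measurableSet_Ioi (fun y _ => fd_integrand_eq a D y)

lemma fd_integral_full {D b : ℝ} (hD : -1 < D) (hb : 0 < b) :
    (∫ y in Set.Ioi (0:ℝ), y ^ D * Real.exp (-b * y)) = b ^ (-(D+1)) * Real.Gamma (D+1) := by
  have h := integral_rpow_mul_exp_neg_mul_rpow (p := 1) (q := D) (b := b) one_pos hD hb
  simp only [Real.rpow_one, div_one, one_div_one, one_mul, mul_one] at h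
  simpa using h

lemma fd_abs_rpow_eq {α Δ : ℝ} {p : ℝ} (hp : 0 < p) :
    (fun x => |fDelta α Δ x| ^ p) =
      (Set.Ioo 0 (Real.exp 1)⁻¹).indicator
        (fun x : ℝ => x ^ (-(α*p)) * (-Real.log x) ^ (Δ*p)) := by
  funext x
  by_cases hx : x ∈ Set.Ioo 0 (Real.exp 1)⁻¹
  · rw [Set.indicator_of_mem hx, fDelta, if_pos hx]
    have hx1 : x < 1 := lt_trans hx.2 (by
      rw [inv_lt_one_iff₀]; right; exact Real.one_lt_exp_iff.mpr one_pos)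
    have hlog : Real.log x < 0 := Real.log_neg hx.1 hx1
    rw [abs_of_neg hlog]
    rw [abs_of_nonneg (mul_nonneg (Real.rpow_nonneg hx.1.le _)
      (Real.rpow_nonneg (by linarith) _))]
    rw [Real.mul_rpow (Real.rpow_nonneg hx.1.le _) (Real.rpow_nonneg (by linarith) _),
      show -(α*p) = (-α)*p by ring, Real.rpow_mul hx.1.le,
      Real.rpow_mul (by linarith : (0:ℝ) ≤ -Real.log x)]
  · rw [Set.indicator_of_notMem hx, fDelta, if_neg hx, abs_zero, Real.zero_rpow hp.ne']

lemma fd_tail_ge {D b : ℝ} (hD : 0 ≤ D) (hb : 0 < b) :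
    (∫ y in Set.Ioi (0:ℝ), y ^ D * Real.exp (-b * y)) - 1 ≤
      ∫ y in Set.Ioi (1:ℝ), y ^ D * Real.exp (-b * y) := by
  have hint : IntegrableOn (fun y : ℝ => y ^ D * Real.exp (-b * y)) (Set.Ioi 0) :=
    fd_int_Ioi0 (by linarith) hb
  have hsplit : (∫ y in Set.Ioi (0:ℝ), y ^ D * Real.exp (-b * y)) =
      (∫ y in Set.Ioc (0:ℝ) 1, y ^ D * Real.exp (-b * y)) +
      ∫ y in Set.Ioi (1:ℝ), y ^ D * Real.exp (-b * y) := by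
    rw [← setIntegral_union (Set.Ioc_disjoint_Ioi le_rfl) measurableSet_Ioi
      (hint.mono_set Set.Ioc_subset_Ioi_self) (hint.mono_set (Set.Ioi_subset_Ioi zero_le_one)),
      Set.Ioc_union_Ioi_eq_Ioi zero_le_one]
  have hIoc : (∫ y in Set.Ioc (0:ℝ) 1, y ^ D * Real.exp (-b * y)) ≤ 1 := by
    have h1 : (∫ y in Set.Ioc (0:ℝ) 1, y ^ D * Real.exp (-b * y)) ≤
        ∫ _ in Set.Ioc (0:ℝ) 1, (1:ℝ) := by
      refine setIntegral_mono_on (hint.mono_set Set.Ioc_subset_Ioi_self)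
        ((integrableOn_const_iff (C := (1:ℝ))).mpr (Or.inr (by simp))) measurableSet_Ioc (fun y hy => ?_)
      have h2 : y ^ D ≤ 1 := Real.rpow_le_one hy.1.le hy.2 hD
      have h3 : Real.exp (-b * y) ≤ 1 := Real.exp_le_one_iff.mpr (by nlinarith [hy.1])
      nlinarith [Real.rpow_nonneg hy.1.le D, Real.exp_pos (-b*y)]
    simpa using h1
  linarith

lemma fd_gamma_max (X : ℝ) (hX : 1 ≤ X) :
    ∃ K m : ℝ, 0 < m ∧ (∀ y ∈ Set.Icc 1 X, Real.Gamma y ≤ K) ∧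
      (∀ y ∈ Set.Icc 1 X, m ≤ Real.Gamma y) := by
  have hcont : ContinuousOn Real.Gamma (Set.Icc 1 X) := by
    intro x hx
    refine (Real.differentiableAt_Gamma (fun m => ?_)).continuousAt.continuousWithinAt
    have := hx.1
    have hm : (0:ℝ) ≤ m := Nat.cast_nonneg m
    intro h; rw [h] at this; linarith
  obtain ⟨xM, _, hM⟩ := isCompact_Icc.exists_isMaxOn ⟨1, Set.left_mem_Icc.mpr hX⟩ hcont
  obtain ⟨xm, hxm, hm⟩ := isCompact_Icc.exists_isMinOn ⟨1, Set.left_mem_Icc.mpr hX⟩ hcont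
  exact ⟨Real.Gamma xM, Real.Gamma xm, Real.Gamma_pos_of_pos (by linarith [hxm.1]), hM, hm⟩

lemma fd_master {α Δ p : ℝ} (hα : 0 < α) (hΔ : 0 ≤ Δ) (hp : 0 < p) (hap : α * p < 1) :
    Integrable (fun x => |fDelta α Δ x| ^ p) ∧
    (∫ x : ℝ, |fDelta α Δ x| ^ p) =
      ∫ y in Set.Ioi (1:ℝ), y ^ (Δ*p) * Real.exp (-(1 - α*p) * y) := by
  have hD : (-1:ℝ) < Δ*p := by nlinarith
  constructor
  · rw [fd_abs_rpow_eq hp]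
    exact (integrable_indicator_iff measurableSet_Ioo).mpr (fd_integrableOn_core hap hD)
  · rw [fd_abs_rpow_eq hp, integral_indicator measurableSet_Ioo]
    exact fd_integral_core (α*p) (Δ*p)

lemma fd_meas (α Δ : ℝ) : Measurable (fDelta α Δ) := by
  unfold fDelta
  refine Measurable.ite measurableSet_Ioo ?_ measurable_const
  measurability

lemma fd_memLp {α Δ p : ℝ} (hα : 0 < α) (hΔ : 0 ≤ Δ) (hp1 : 1 ≤ p) (hap : α*p < 1) :
    MemLp (fDelta α Δ) (ENNReal.ofReal p) volume := by
  have hp : 0 < p := lt_of_lt_of_le one_pos hp1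
  have hq0 : ENNReal.ofReal p ≠ 0 := by simp only [ne_eq, ENNReal.ofReal_eq_zero, not_le]; linarith
  have hqt : ENNReal.ofReal p ≠ ⊤ := ENNReal.ofReal_ne_top
  refine (memLp_norm_rpow_iff (fd_meas α Δ).aestronglyMeasurable hq0 hqt).mp ?_
  rw [ENNReal.div_self hq0 hqt, ENNReal.toReal_ofReal hp.le]
  refine memLp_one_iff_integrable.mpr ?_
  simpa [Real.norm_eq_abs] using (fd_master hα hΔ hp hap).1

set_option maxHeartbeats 1000000 in
theorem fDelta_Lp_norm_asymptotics (α Δ : ℝ) (hα : 0 < α) (hα1 : α < 1) (hΔ : 0 ≤ Δ) :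
    (∀ p : ℝ, 1 ≤ p → p < 1 / α →
      MemLp (fDelta α Δ) (ENNReal.ofReal p) volume) ∧
    ∃ c C δ : ℝ, 0 < c ∧ c ≤ C ∧ 0 < δ ∧
      ∀ p : ℝ, 1 / α - δ < p → p < 1 / α →
        c * (1 / α - p) ^ (-(Δ + α)) ≤ (∫ x : ℝ, |fDelta α Δ x| ^ p) ^ (1 / p) ∧
        (∫ x : ℝ, |fDelta α Δ x| ^ p) ^ (1 / p) ≤ C * (1 / α - p) ^ (-(Δ + α)) := by
  constructor
  · intro p hp1 hp2
    refine fd_memLp hα hΔ hp1 ?_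
    rw [mul_comm]; exact (lt_div_iff₀ hα).mp hp2
  · obtain ⟨K, m', hm'pos, hKmax, hmmin⟩ := fd_gamma_max (Δ/α + 1)
      (le_add_of_nonneg_left (div_nonneg hΔ hα.le))
    set m₀ : ℝ := min m' 1 with hm₀def
    have hm₀pos : 0 < m₀ := lt_min hm'pos one_pos
    have hm₀le1 : m₀ ≤ 1 := min_le_right _ _
    have hm₀m' : m₀ ≤ m' := min_le_left _ _
    set M : ℝ := max K 1 with hMdef
    have hM1 : 1 ≤ M := le_max_right _ _
    have hKM : K ≤ M := le_max_left _ _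
    set δ : ℝ := min 1 (min (1/(2*α)) (m₀/(2*α))) with hδdef
    have hδpos : 0 < δ := lt_min one_pos (lt_min (by positivity) (by positivity))
    set C : ℝ := α ^ (-Δ-2*α) * Real.exp (2*α^2) * M^(2*α) with hCdef
    set c : ℝ := (1/2:ℝ)^(2*α) * m₀^(2*α) with hcdef
    have hcpos : 0 < c := by positivity
    clear_value m₀ M δ C c
    refine ⟨c, max C c, δ, hcpos, le_max_right _ _, hδpos, ?_⟩
    intro p hp1 hp2
    set t : ℝ := 1/α - p with htdef
    clear_value t
    have ht0 : 0 < t := by simp only [htdef]; linarith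
    have htδ : t < δ := by simp only [htdef]; linarith
    have hδ1 : δ ≤ 1 := by rw [hδdef]; exact min_le_left _ _
    have hδ2 : δ ≤ 1/(2*α) := by rw [hδdef]; exact (min_le_right _ _).trans (min_le_left _ _)
    have hδ3 : δ ≤ m₀/(2*α) := by rw [hδdef]; exact (min_le_right _ _).trans (min_le_right _ _)
    have ht1 : t < 1 := lt_of_lt_of_le htδ hδ1
    have ht2a : t < 1/(2*α) := lt_of_lt_of_le htδ hδ2
    have htm : t < m₀/(2*α) := lt_of_lt_of_le htδ hδ3
    have hhalf : 1/α - 1/(2*α) = 1/(2*α) := by field_simp; ring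
    have hp_half : 1/(2*α) < p := by
      have : t < 1/(2*α) := ht2a
      simp only [htdef] at this; linarith
    have hp0 : 0 < p := lt_trans (by positivity) hp_half
    have hinv : 1/p < 2*α := by
      rw [div_lt_iff₀ hp0]
      have h2 := mul_lt_mul_of_pos_right hp_half (by positivity : (0:ℝ) < 2*α)
      have h3 : (1/(2*α)) * (2*α) = 1 := by field_simp
      nlinarith
    have hap : α*p < 1 := by
      have := mul_lt_mul_of_pos_left hp2 hα
      have h1 : α * (1/α) = 1 := by field_simp
      linarith
    have hinv2 : α < 1/p := by rw [lt_div_iff₀ hp0]; linarith [mul_comm α p]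
    have hbt : 1 - α*p = α*t := by
      simp only [htdef]; field_simp
    have hat0 : 0 < α*t := by positivity
    have hat1 : α*t < 1/2 := by
      have := mul_lt_mul_of_pos_left ht2a hα
      have h1 : α * (1/(2*α)) = 1/2 := by field_simp
      linarith
    have hD0 : (0:ℝ) ≤ Δ*p := by positivity
    have hD1 : (1:ℝ) ≤ Δ*p + 1 := by linarith
    have hDX : Δ*p + 1 ≤ Δ/α + 1 := by
      have := mul_le_mul_of_nonneg_left hp2.le hΔ
      rw [mul_one_div] at this
      linarith
    have hΓle : Real.Gamma (Δ*p+1) ≤ K := hKmax _ ⟨hD1, hDX⟩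
    have hΓge : m' ≤ Real.Gamma (Δ*p+1) := hmmin _ ⟨hD1, hDX⟩
    have hΓpos : 0 < Real.Gamma (Δ*p+1) := lt_of_lt_of_le hm'pos hΓge
    obtain ⟨hJint, hJval⟩ := fd_master hα hΔ hp0 hap
    rw [hbt] at hJval
    set T : ℝ := ∫ y in Set.Ioi (1:ℝ), y ^ (Δ*p) * Real.exp (-(α*t) * y) with hTdef
    set G : ℝ := (α*t) ^ (-(Δ*p+1)) * Real.Gamma (Δ*p+1) with hGdef
    clear_value T G
    have hfull : (∫ y in Set.Ioi (0:ℝ), y ^ (Δ*p) * Real.exp (-(α*t) * y)) = G := by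
      rw [hGdef]; exact fd_integral_full (by linarith) hat0
    have hTG : T ≤ G := by
      rw [← hfull, hTdef]
      refine setIntegral_mono_set (fd_int_Ioi0 (by linarith) hat0) ?_
        ((Set.Ioi_subset_Ioi zero_le_one).eventuallyLE)
      filter_upwards [ae_restrict_mem measurableSet_Ioi] with y hy
      have : (0:ℝ) < y := hy
      positivity
    have hGT : G - 1 ≤ T := by
      rw [hTdef, ← hfull]; exact fd_tail_ge hD0 hat0
    have hG2 : (2:ℝ) ≤ G := by
      have e1 : (α*t)^(-(1:ℝ)) ≤ (α*t) ^ (-(Δ*p+1)) :=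
        Real.rpow_le_rpow_of_exponent_ge hat0 (hat1.trans one_half_lt_one).le
          (by linarith only [hD0])
      have e2 : (α*t)^(-(1:ℝ)) = (α*t)⁻¹ := Real.rpow_neg_one _
      have e3 : 2 ≤ m₀ * (α*t)⁻¹ := by
        rw [← div_eq_mul_inv, le_div_iff₀ hat0]
        have h1 := (lt_div_iff₀ (by positivity : (0:ℝ) < 2*α)).mp htm
        linarith only [h1]
      have e4 : m₀ * (α*t)⁻¹ ≤ G := by
        rw [hGdef]
        have := mul_le_mul e1 (hm₀m'.trans hΓge)
          hm₀pos.le (Real.rpow_nonneg hat0.le _)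
        rw [e2] at this
        calc m₀ * (α*t)⁻¹ = (α*t)⁻¹ * m₀ := by ring
          _ ≤ (α*t) ^ (-(Δ*p+1)) * Real.Gamma (Δ*p+1) := this
      linarith only [e3, e4]
    have hT2 : G/2 ≤ T := by linarith only [hGT, hG2]
    have hTpos : 0 < T := by linarith only [hT2, hG2]
    have hexp : (-(Δ*p+1))*(1/p) = -Δ-1/p := by field_simp; ring
    have hgrp : G ^ (1/p) = α^(-Δ-1/p) * t^(-Δ-1/p) * Real.Gamma (Δ*p+1) ^ (1/p) := by
      rw [hGdef, Real.mul_rpow (Real.rpow_nonneg hat0.le _) hΓpos.le,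
        ← Real.rpow_mul hat0.le, hexp, Real.mul_rpow hα.le ht0.le]
    rw [hJval]
    constructor
    · -- lower bound
      have l0 : (G/2)^(1/p) ≤ T^(1/p) :=
        Real.rpow_le_rpow (by linarith) hT2 (by positivity)
      have lsplit : (G/2)^(1/p) = G^(1/p) * (1/2:ℝ)^(1/p) := by
        rw [show G/2 = G * (1/2) by ring,
          Real.mul_rpow (by linarith) (by norm_num)]
      have l1 : (1/2:ℝ)^(2*α) ≤ (1/2:ℝ)^(1/p) :=
        Real.rpow_le_rpow_of_exponent_ge (by norm_num) (by norm_num) hinv.le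
      have l2 : m₀^(2*α) ≤ Real.Gamma (Δ*p+1)^(1/p) := by
        calc m₀^(2*α) ≤ m₀^(1/p) :=
              Real.rpow_le_rpow_of_exponent_ge hm₀pos hm₀le1 hinv.le
          _ ≤ Real.Gamma (Δ*p+1)^(1/p) :=
              Real.rpow_le_rpow hm₀pos.le (hm₀m'.trans hΓge) (by positivity)
      have l3 : t^(-(Δ+α)) ≤ α^(-Δ-1/p) * t^(-Δ-1/p) := by
        have a1 : (1:ℝ) ≤ α^(-Δ-1/p) := by
          refine Real.one_le_rpow_of_pos_of_le_one_of_nonpos hα hα1.le ?_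
          have h := one_div_pos.mpr hp0
          linarith only [h, hΔ]
        have a2 : t^(-(Δ+α)) ≤ t^(-Δ-1/p) :=
          Real.rpow_le_rpow_of_exponent_ge ht0 ht1.le (by linarith only [hinv2])
        calc t^(-(Δ+α)) ≤ t^(-Δ-1/p) := a2
          _ ≤ α^(-Δ-1/p) * t^(-Δ-1/p) :=
              le_mul_of_one_le_left (Real.rpow_nonneg ht0.le _) a1
      calc c * t^(-(Δ+α)) = (1/2:ℝ)^(2*α) * (m₀^(2*α) * t^(-(Δ+α))) := by
            rw [hcdef]; ring
        _ ≤ (1/2:ℝ)^(1/p) * (Real.Gamma (Δ*p+1)^(1/p) * (α^(-Δ-1/p) * t^(-Δ-1/p))) := by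
            refine mul_le_mul l1 (mul_le_mul l2 l3 (Real.rpow_nonneg ht0.le _) ?_) ?_ ?_
            · positivity
            · positivity
            · positivity
        _ = (G/2)^(1/p) := by rw [lsplit, hgrp]; ring
        _ ≤ T^(1/p) := l0
    · -- upper bound
      have u0 : T^(1/p) ≤ G^(1/p) :=
        Real.rpow_le_rpow hTpos.le hTG (by positivity)
      have u1 : α^(-Δ-1/p) ≤ α^(-Δ-2*α) :=
        Real.rpow_le_rpow_of_exponent_ge hα hα1.le (by linarith only [hinv])
      have u2 : Real.Gamma (Δ*p+1)^(1/p) ≤ M^(2*α) := by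
        calc Real.Gamma (Δ*p+1)^(1/p) ≤ M^(1/p) :=
              Real.rpow_le_rpow hΓpos.le (hΓle.trans hKM) (by positivity)
          _ ≤ M^(2*α) := Real.rpow_le_rpow_of_exponent_le hM1 hinv.le
      have u3 : t^(-Δ-1/p) ≤ t^(-(Δ+α)) * Real.exp (2*α^2) := by
        have split : t^(-Δ-1/p) = t^(-(Δ+α)) * t^(α-1/p) := by
          rw [← Real.rpow_add ht0, show -(Δ+α)+(α-1/p) = -Δ-1/p by ring]
        have hb : t^(α-1/p) ≤ Real.exp (2*α^2) := by
          rw [Real.rpow_def_of_pos ht0]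
          apply Real.exp_le_exp.mpr
          have hlog : -Real.log t ≤ t⁻¹ := by
            have h := Real.log_le_sub_one_of_pos (inv_pos.mpr ht0)
            rw [Real.log_inv] at h
            have h2 : (0:ℝ) < t⁻¹ := inv_pos.mpr ht0
            linarith only [h, h2]
          have hlognn : 0 ≤ -Real.log t := by
            have h := Real.log_nonpos ht0.le ht1.le
            linarith only [h]
          have hfrac : 1/p - α = α*t/p := by
            rw [eq_div_iff hp0.ne', sub_mul, one_div_mul_cancel hp0.ne', ← hbt]
          have hfle : α*t/p ≤ 2*α^2*t := by
            rw [div_le_iff₀ hp0]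
            have h1 : 1 < 2*α*p := (div_lt_iff₀ hp0).mp hinv
            have h2 := mul_le_mul_of_nonneg_left h1.le hat0.le
            linarith only [h2]
          calc Real.log t * (α - 1/p) = (-Real.log t) * (1/p - α) := by ring
            _ ≤ t⁻¹ * (2*α^2*t) := by
                refine mul_le_mul hlog ?_ ?_ (by positivity)
                · rw [hfrac]; exact hfle
                · rw [hfrac]; positivity
            _ = 2*α^2 := by field_simp
        calc t^(-Δ-1/p) = t^(-(Δ+α)) * t^(α-1/p) := split
          _ ≤ t^(-(Δ+α)) * Real.exp (2*α^2) :=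
              mul_le_mul_of_nonneg_left hb (Real.rpow_nonneg ht0.le _)
      calc T^(1/p) ≤ G^(1/p) := u0
        _ = α^(-Δ-1/p) * t^(-Δ-1/p) * Real.Gamma (Δ*p+1)^(1/p) := hgrp
        _ ≤ α^(-Δ-2*α) * (t^(-(Δ+α)) * Real.exp (2*α^2)) * M^(2*α) := by
            refine mul_le_mul (mul_le_mul u1 u3 (Real.rpow_nonneg ht0.le _) ?_) u2 ?_ ?_
            · positivity
            · positivity
            · positivity
        _ = C * t^(-(Δ+α)) := by rw [hCdef]; ring
        _ ≤ max C c * t^(-(Δ+α)) :=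
            mul_le_mul_of_nonneg_right (le_max_left _ _) (Real.rpow_nonneg ht0.le _)
end

section
/- Fix 0 < α < 1 and Δ ≥ 0 and let g_Δ(x) = x^{-1}(log x)^Δ for x > e, zero otherwise. Set u_Δ = I_α g_Δ with I_α g(x) = ∫_ℝ g(y)|x-y|^{α-1} dy. Then there exist constants 0 < c ≤ C and x_0 > e such that c·x^{α-1}(log x)^{Δ+1} ≤ u_Δ(x) ≤ C·x^{α-1}(log x)^{Δ+1} for all x > x_0. -/
open MeasureTheory Real Set Filter

noncomputable def gDelta (Δ : ℝ) (x : ℝ) : ℝ :=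
  if Real.exp 1 < x then x⁻¹ * (Real.log x) ^ Δ else 0

noncomputable def riesz1 (α : ℝ) (g : ℝ → ℝ) (x : ℝ) : ℝ :=
  ∫ y : ℝ, g y * |x - y| ^ (α - 1)

lemma logpow_le {Δ ε b y : ℝ} (hΔ : 0 ≤ Δ) (hε : 0 < ε) (hb : 1 < b)
    (hby : b ≤ y) (h : Δ / ε ≤ Real.log b) :
    Real.log y ^ Δ ≤ Real.log b ^ Δ * (y / b) ^ ε := by
  have hb0 : (0:ℝ) < b := by linarith
  have hy0 : (0:ℝ) < y := by linarith
  have hlb : 0 < Real.log b := Real.log_pos hb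
  have hly : Real.log b ≤ Real.log y := Real.log_le_log hb0 hby
  set s := Real.log y / Real.log b with hs
  have hs1 : 1 ≤ s := (one_le_div hlb).2 hly
  have hs0 : 0 < s := by linarith
  have h1 : Real.log y = Real.log b * s := by
    rw [hs, mul_div_assoc', mul_comm, mul_div_assoc, div_self hlb.ne', mul_one]
  have key : s ^ Δ ≤ (y / b) ^ ε := by
    rw [Real.rpow_def_of_pos hs0, Real.rpow_def_of_pos (div_pos hy0 hb0),
      Real.log_div (ne_of_gt hy0) (ne_of_gt hb0)]
    apply Real.exp_le_exp.2
    have hlog : Real.log s ≤ s - 1 := Real.log_le_sub_one_of_pos hs0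
    have hΔε : Δ ≤ ε * Real.log b := by
      rw [div_le_iff₀ hε] at h; linarith [h]
    have h2 : Real.log s * Δ ≤ (s - 1) * Δ := by nlinarith
    have h3 : (s - 1) * Δ ≤ (s - 1) * (ε * Real.log b) := by nlinarith
    have h4 : (s - 1) * (ε * Real.log b) = (Real.log y - Real.log b) * ε := by
      rw [h1]; ring
    linarith
  calc Real.log y ^ Δ = (Real.log b * s) ^ Δ := by rw [← h1]
    _ = Real.log b ^ Δ * s ^ Δ := Real.mul_rpow hlb.le hs0.le
    _ ≤ Real.log b ^ Δ * (y / b) ^ ε :=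
        mul_le_mul_of_nonneg_left key (Real.rpow_nonneg hlb.le Δ)

lemma contOn_log_pow {Δ : ℝ} (hΔ : 0 ≤ Δ) {a b : ℝ} (ha : 1 ≤ a) (hab : a ≤ b) :
    ContinuousOn (fun y : ℝ => y⁻¹ * Real.log y ^ Δ) (Set.uIcc a b) := by
  have hsub : Set.uIcc a b ⊆ {0}ᶜ := by
    rw [Set.uIcc_of_le hab]
    intro z hz
    simp only [Set.mem_compl_iff, Set.mem_singleton_iff]
    have : (1:ℝ) ≤ z := le_trans ha hz.1
    linarith
  apply ContinuousOn.mul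
  · exact continuousOn_inv₀.mono hsub
  · exact (Real.continuousOn_log.mono hsub).rpow_const (fun z hz => Or.inr hΔ)

lemma ftc_log_pow {Δ : ℝ} (hΔ : 0 ≤ Δ) {a b : ℝ} (ha : 1 ≤ a) (hab : a ≤ b) :
    ∫ y in a..b, y⁻¹ * Real.log y ^ Δ =
      (Real.log b ^ (Δ + 1) - Real.log a ^ (Δ + 1)) / (Δ + 1) := by
  have hΔ1 : (0:ℝ) < Δ + 1 := by linarith
  have hderiv : ∀ y ∈ Set.uIcc a b,
      HasDerivAt (fun z : ℝ => Real.log z ^ (Δ + 1) / (Δ + 1)) (y⁻¹ * Real.log y ^ Δ) y := by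
    intro y hy
    rw [Set.uIcc_of_le hab] at hy
    have hy1 : (1:ℝ) ≤ y := le_trans ha hy.1
    have hy0 : y ≠ 0 := by linarith
    have h := ((Real.hasDerivAt_log hy0).rpow_const
      (Or.inr (by linarith : (1:ℝ) ≤ Δ + 1))).div_const (Δ + 1)
    exact h.congr_deriv (by
      rw [show Δ + 1 - 1 = Δ by ring, mul_comm y⁻¹ (Δ+1), mul_assoc,
        mul_div_cancel_left₀ _ hΔ1.ne'])
  rw [intervalIntegral.integral_eq_sub_of_hasDerivAt hderiv
    ((contOn_log_pow hΔ ha hab).intervalIntegrable)]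
  ring

lemma intOn_log_pow {Δ : ℝ} (hΔ : 0 ≤ Δ) {a b : ℝ} (ha : 1 ≤ a) (hab : a ≤ b) :
    IntegrableOn (fun y : ℝ => y⁻¹ * Real.log y ^ Δ) (Set.Ioc a b) := by
  have h : IntervalIntegrable (fun y : ℝ => y⁻¹ * Real.log y ^ Δ) volume a b :=
    (contOn_log_pow hΔ ha hab).intervalIntegrable
  rwa [intervalIntegrable_iff_integrableOn_Ioc_of_le hab] at h

set_option maxHeartbeats 2000000 in
theorem riesz_of_gDelta_pointwise_asymptotics
    (α Δ : ℝ) (hα : 0 < α) (hα1 : α < 1) (hΔ : 0 ≤ Δ) :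
    ∃ c C x₀ : ℝ, 0 < c ∧ c ≤ C ∧ Real.exp 1 < x₀ ∧
      ∀ x : ℝ, x₀ < x →
        c * x ^ (α - 1) * (Real.log x) ^ (Δ + 1) ≤ riesz1 α (gDelta Δ) x ∧
        riesz1 α (gDelta Δ) x ≤ C * x ^ (α - 1) * (Real.log x) ^ (Δ + 1) := by
  have hΔ1 : (0:ℝ) < Δ + 1 := by linarith
  set ε : ℝ := (1 - α) / 2 with hεdef
  have hε : 0 < ε := by rw [hεdef]; linarith
  have h2e : (2:ℝ) < Real.exp 1 := by
    have := Real.exp_one_gt_d9; linarith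
  have he1 : (1:ℝ) ≤ Real.exp 1 := by linarith
  refine ⟨1/(2*(Δ+1)), 2/(Δ+1) + 2^(Δ+2)/α + 2^Δ/ε, Real.exp (Δ/ε + 2), ?_, ?_, ?_, ?_⟩
  · positivity
  · have h1 : 1/(2*(Δ+1)) ≤ 2/(Δ+1) := by
      rw [div_le_div_iff₀ (by linarith) (by linarith)]; nlinarith
    have h2 : (0:ℝ) < 2^(Δ+2)/α := by positivity
    have h3 : (0:ℝ) < 2^Δ/ε := by positivity
    linarith
  · exact Real.exp_lt_exp.2 (by have : 0 ≤ Δ/ε := div_nonneg hΔ hε.le; linarith)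
  intro x hx
  -- basic facts about x
  have hx0 : (0:ℝ) < x := lt_trans (Real.exp_pos _) hx
  have hlx : Δ/ε + 2 ≤ Real.log x := by
    have h := Real.log_lt_log (Real.exp_pos _) hx
    rw [Real.log_exp] at h; exact h.le
  have hδε : 0 ≤ Δ/ε := div_nonneg hΔ hε.le
  have hlx2 : 2 ≤ Real.log x := by linarith
  have hex : Real.exp 1 < x := by
    calc Real.exp 1 < Real.exp (Δ/ε + 2) := Real.exp_lt_exp.2 (by linarith)
      _ < x := hx
  have hx1 : (1:ℝ) < x := by linarith
  have hex2 : Real.exp 1 < x / 2 := by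
    have h1 : Real.exp 2 ≤ x := by
      calc Real.exp 2 ≤ Real.exp (Δ/ε + 2) := Real.exp_le_exp.2 (by linarith)
        _ ≤ x := hx.le
    have h2 : Real.exp 2 = Real.exp 1 * Real.exp 1 := by
      rw [← Real.exp_add]; norm_num
    nlinarith
  have hx2 : (2:ℝ) < x := by nlinarith [Real.exp_pos 1]
  have hl0 : (0:ℝ) < Real.log x := by linarith
  have hl1 : (1:ℝ) ≤ Real.log x := by linarith
  set l := Real.log x with hldef
  set X := x ^ (α - 1) with hXdef
  set L := l ^ (Δ + 1) with hLdef
  have hX0 : 0 ≤ X := Real.rpow_nonneg hx0.le _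
  have hlL : l ≤ L := by
    calc l = l ^ (1:ℝ) := (Real.rpow_one l).symm
      _ ≤ l ^ (Δ + 1) := Real.rpow_le_rpow_of_exponent_le hl1 (by linarith)
  have hL2 : 2 ≤ L := le_trans hlx2 hlL
  have hL0 : 0 ≤ L := by linarith
  set f : ℝ → ℝ := fun y => gDelta Δ y * |x - y| ^ (α - 1) with hfdef
  have hfm : Measurable f := by
    apply Measurable.mul
    · unfold gDelta
      exact Measurable.ite (measurableSet_lt measurable_const measurable_id)
        (measurable_inv.mul (Real.measurable_log.pow measurable_const)) measurable_const
    · exact ((measurable_const.sub measurable_id).abs).pow measurable_const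
  have hfIoi : ∀ y ∈ Ioi (Real.exp 1), f y = y⁻¹ * Real.log y ^ Δ * |x - y| ^ (α - 1) := by
    intro y hy
    simp only [hfdef, gDelta, if_pos (mem_Ioi.1 hy)]
  have hcompl : ∀ y, y ∉ Ioi (Real.exp 1) → f y = 0 := by
    intro y hy
    have hy' : ¬ Real.exp 1 < y := by simpa [mem_Ioi] using hy
    simp only [hfdef, gDelta]
    rw [if_neg hy', zero_mul]
  have hf_nonneg : ∀ y, 0 ≤ f y := by
    intro y
    apply mul_nonneg _ (Real.rpow_nonneg (abs_nonneg _) _)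
    unfold gDelta
    split_ifs with h
    · have hy1 : (1:ℝ) ≤ y := by nlinarith
      exact mul_nonneg (inv_nonneg.2 (by linarith)) (Real.rpow_nonneg (Real.log_nonneg hy1) _)
    · exact le_rfl
  -- integrability on (e, x]
  have hrpow_int : ∀ a b : ℝ, IntervalIntegrable (fun t : ℝ => t ^ (α - 1)) volume a b :=
    fun a b => intervalIntegral.intervalIntegrable_rpow' (by linarith)
  have hJ1 : IntegrableOn (fun y : ℝ => (x - y) ^ (α - 1)) (Ioc (Real.exp 1) x) := by
    have h := (hrpow_int (x - Real.exp 1) 0).comp_sub_left x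
    simp only [sub_sub_cancel, sub_zero] at h
    rwa [intervalIntegrable_iff_integrableOn_Ioc_of_le hex.le] at h
  have hJ2 : IntegrableOn (fun y : ℝ => (y - x) ^ (α - 1)) (Ioc x (2*x)) := by
    have h := (hrpow_int 0 x).comp_sub_right x
    rw [zero_add] at h
    rwa [intervalIntegrable_iff_integrableOn_Ioc_of_le (by linarith),
      show x + x = 2*x by ring] at h
  have hI1 : IntegrableOn f (Ioc (Real.exp 1) x) := by
    apply Integrable.mono' (hJ1.const_mul (Real.log x ^ Δ))
      (hfm.aestronglyMeasurable.restrict)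
    rw [ae_restrict_iff' measurableSet_Ioc]
    apply ae_of_all
    intro y hy
    have hy1 : Real.exp 1 < y := hy.1
    have hyx : y ≤ x := hy.2
    have hy1' : (1:ℝ) ≤ y := by linarith
    rw [Real.norm_eq_abs, abs_of_nonneg (hf_nonneg y),
      hfIoi y (mem_Ioi.2 hy1), abs_of_nonneg (by linarith : (0:ℝ) ≤ x - y)]
    have h1 : y⁻¹ ≤ 1 := by
      rw [inv_le_one_iff₀]; right; linarith
    have h2 : Real.log y ^ Δ ≤ Real.log x ^ Δ :=
      Real.rpow_le_rpow (Real.log_nonneg hy1') (Real.log_le_log (by linarith) hyx) hΔ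
    have h3 : (0:ℝ) ≤ (x - y) ^ (α - 1) := Real.rpow_nonneg (by linarith) _
    have h4 : (0:ℝ) ≤ Real.log y ^ Δ := Real.rpow_nonneg (Real.log_nonneg hy1') _
    have h5 : (0:ℝ) ≤ y⁻¹ := by positivity
    linarith [mul_le_mul_of_nonneg_right (mul_le_mul h1 h2 h4 zero_le_one) h3]
  have hI2 : IntegrableOn f (Ioc x (2*x)) := by
    apply Integrable.mono' (hJ2.const_mul (Real.log (2*x) ^ Δ))
      (hfm.aestronglyMeasurable.restrict)
    rw [ae_restrict_iff' measurableSet_Ioc]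
    apply ae_of_all
    intro y hy
    have hy1 : x < y := hy.1
    have hyx : y ≤ 2*x := hy.2
    have hy1' : (1:ℝ) ≤ y := by linarith
    rw [Real.norm_eq_abs, abs_of_nonneg (hf_nonneg y),
      hfIoi y (mem_Ioi.2 (by linarith)), abs_sub_comm,
      abs_of_nonneg (by linarith : (0:ℝ) ≤ y - x)]
    have h1 : y⁻¹ ≤ 1 := by
      rw [inv_le_one_iff₀]; right; linarith
    have h2 : Real.log y ^ Δ ≤ Real.log (2*x) ^ Δ :=
      Real.rpow_le_rpow (Real.log_nonneg hy1') (Real.log_le_log (by linarith) hyx) hΔ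
    have h3 : (0:ℝ) ≤ (y - x) ^ (α - 1) := Real.rpow_nonneg (by linarith) _
    have h4 : (0:ℝ) ≤ Real.log y ^ Δ := Real.rpow_nonneg (Real.log_nonneg hy1') _
    have h5 : (0:ℝ) ≤ y⁻¹ := by positivity
    linarith [mul_le_mul_of_nonneg_right (mul_le_mul h1 h2 h4 zero_le_one) h3]
  -- tail pointwise bound
  have h2x0 : (0:ℝ) < 2*x := by linarith
  have h2x1 : (1:ℝ) < 2*x := by linarith
  have hlog2x : 0 ≤ Real.log (2*x) := Real.log_nonneg (by linarith)
  have hεlog : Δ/ε ≤ Real.log (2*x) := by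
    calc Δ/ε ≤ Real.log x := by linarith
      _ ≤ Real.log (2*x) := Real.log_le_log hx0 (by linarith)
  set K3 : ℝ := 2^(1-α) * Real.log (2*x) ^ Δ * (2*x)^(-ε) with hK3def
  have hK30 : 0 ≤ K3 := by
    apply mul_nonneg (mul_nonneg (Real.rpow_nonneg (by norm_num) _)
      (Real.rpow_nonneg hlog2x _)) (Real.rpow_nonneg h2x0.le _)
  have hCpt : ∀ y ∈ Ioi (2*x), f y ≤ K3 * y ^ (α - 2 + ε) := by
    intro y hy
    rw [mem_Ioi] at hy
    have hy0 : (0:ℝ) < y := by linarith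
    have hey : Real.exp 1 < y := by linarith
    have hy1' : (1:ℝ) ≤ y := by linarith
    rw [hfIoi y (mem_Ioi.2 hey), abs_sub_comm, abs_of_nonneg (by linarith : (0:ℝ) ≤ y - x)]
    have h1 : (y - x) ^ (α-1) ≤ (y/2) ^ (α-1) :=
      Real.rpow_le_rpow_of_nonpos (by linarith) (by linarith) (by linarith)
    have h2 : Real.log y ^ Δ ≤ Real.log (2*x) ^ Δ * (y/(2*x)) ^ ε :=
      logpow_le hΔ hε h2x1 hy.le hεlog
    have hb : 0 ≤ y⁻¹ * (Real.log (2*x) ^ Δ * (y/(2*x)) ^ ε) := by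
      apply mul_nonneg (by positivity) (mul_nonneg (Real.rpow_nonneg hlog2x _)
        (Real.rpow_nonneg (by positivity) _))
    calc y⁻¹ * Real.log y ^ Δ * (y-x) ^ (α-1)
        ≤ y⁻¹ * (Real.log (2*x) ^ Δ * (y/(2*x)) ^ ε) * ((y/2) ^ (α-1)) := by
          apply mul_le_mul _ h1 (Real.rpow_nonneg (by linarith) _) hb
          exact mul_le_mul_of_nonneg_left h2 (by positivity)
      _ = K3 * y ^ (α - 2 + ε) := by
          have e1 : (y/(2*x)) ^ ε = y ^ ε * (2*x) ^ (-ε) := by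
            rw [Real.div_rpow hy0.le h2x0.le, Real.rpow_neg h2x0.le, div_eq_mul_inv]
          have e2 : (y/2) ^ (α-1) = y ^ (α-1) * 2 ^ (1-α) := by
            rw [Real.div_rpow hy0.le (by norm_num : (0:ℝ) ≤ 2), div_eq_mul_inv,
              ← Real.rpow_neg (by norm_num : (0:ℝ) ≤ 2), show -(α-1) = 1-α by ring]
          have e3 : y⁻¹ * y ^ ε * y ^ (α-1) = y ^ (α - 2 + ε) := by
            rw [← Real.rpow_neg_one y, ← Real.rpow_add hy0, ← Real.rpow_add hy0]
            ring_nf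
          rw [e1, e2, hK3def, ← e3]; ring
  have hI3 : IntegrableOn f (Ioi (2*x)) := by
    have hexp : α - 2 + ε < -1 := by rw [hεdef]; linarith
    apply Integrable.mono'
      ((integrableOn_Ioi_rpow_of_lt hexp h2x0).const_mul K3)
      (hfm.aestronglyMeasurable.restrict)
    rw [ae_restrict_iff' measurableSet_Ioi]
    apply ae_of_all
    intro y hy
    rw [Real.norm_eq_abs, abs_of_nonneg (hf_nonneg y)]
    exact hCpt y hy
  have h12 : IntegrableOn f (Ioc (Real.exp 1) (2*x)) := by
    have h := hI1.union hI2
    rwa [Set.Ioc_union_Ioc_eq_Ioc hex.le (by linarith)] at h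
  have hIe : IntegrableOn f (Ioi (Real.exp 1)) := by
    have h := h12.union hI3
    rwa [Set.Ioc_union_Ioi_eq_Ioi (by linarith)] at h
  have hInt : Integrable f := by
    rw [← integrableOn_iff_integrable_of_support_subset
      (Function.support_subset_iff'.2 hcompl)]
    exact hIe
  have hriesz : riesz1 α (gDelta Δ) x = ∫ y, f y := rfl
  constructor
  · -- LOWER BOUND
    have hIoo : IntegrableOn f (Ioo (Real.exp 1) x) := hI1.mono_set Ioo_subset_Ioc_self
    have low1 : ∫ y in Ioo (Real.exp 1) x, f y ≤ ∫ y, f y :=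
      setIntegral_le_integral hInt (ae_of_all _ hf_nonneg)
    have hglow : IntegrableOn (fun y : ℝ => X * (y⁻¹ * Real.log y ^ Δ)) (Ioo (Real.exp 1) x) :=
      (((intOn_log_pow hΔ he1 hex.le).mono_set Ioo_subset_Ioc_self).const_mul X)
    have low2 : ∫ y in Ioo (Real.exp 1) x, X * (y⁻¹ * Real.log y ^ Δ)
        ≤ ∫ y in Ioo (Real.exp 1) x, f y := by
      apply setIntegral_mono_on hglow hIoo measurableSet_Ioo
      intro y hy
      have hy1 : Real.exp 1 < y := hy.1
      have hyx : y < x := hy.2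
      have hy1' : (1:ℝ) ≤ y := by linarith
      rw [hfIoi y (mem_Ioi.2 hy1), abs_of_nonneg (by linarith : (0:ℝ) ≤ x - y)]
      have hstep : X ≤ (x - y) ^ (α - 1) := by
        rw [hXdef]
        exact Real.rpow_le_rpow_of_nonpos (by linarith) (by linarith) (by linarith)
      have hnn : 0 ≤ y⁻¹ * Real.log y ^ Δ :=
        mul_nonneg (by positivity) (Real.rpow_nonneg (Real.log_nonneg hy1') _)
      calc X * (y⁻¹ * Real.log y ^ Δ) = (y⁻¹ * Real.log y ^ Δ) * X := by ring
        _ ≤ (y⁻¹ * Real.log y ^ Δ) * (x - y) ^ (α - 1) :=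
            mul_le_mul_of_nonneg_left hstep hnn
        _ = y⁻¹ * Real.log y ^ Δ * (x - y) ^ (α - 1) := by ring
    have low3 : ∫ y in Ioo (Real.exp 1) x, X * (y⁻¹ * Real.log y ^ Δ)
        = X * ((L - 1) / (Δ + 1)) := by
      rw [MeasureTheory.integral_const_mul, ← MeasureTheory.integral_Ioc_eq_integral_Ioo,
        ← intervalIntegral.integral_of_le hex.le, ftc_log_pow hΔ he1 hex.le,
        Real.log_exp, Real.one_rpow, ← hldef, ← hLdef]
    have hfin : 1/(2*(Δ+1)) * X * L ≤ X * ((L - 1) / (Δ + 1)) := by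
      have key : 1/(2*(Δ+1)) * L ≤ (L - 1) / (Δ + 1) := by
        have hdiff : (L - 1) / (Δ + 1) - 1/(2*(Δ+1)) * L = (L - 2) / (2*(Δ+1)) := by
          field_simp
          ring
        have hnn : (0:ℝ) ≤ (L - 2) / (2*(Δ+1)) :=
          div_nonneg (by linarith) (by linarith)
        linarith
      calc 1/(2*(Δ+1)) * X * L = X * (1/(2*(Δ+1)) * L) := by ring
        _ ≤ X * ((L - 1) / (Δ + 1)) := mul_le_mul_of_nonneg_left key hX0
    rw [hriesz]
    calc 1/(2*(Δ+1)) * X * L ≤ X * ((L - 1) / (Δ + 1)) := hfin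
      _ = ∫ y in Ioo (Real.exp 1) x, X * (y⁻¹ * Real.log y ^ Δ) := low3.symm
      _ ≤ ∫ y in Ioo (Real.exp 1) x, f y := low2
      _ ≤ ∫ y, f y := low1
  · -- UPPER BOUND
    have hImidA : IntegrableOn f (Ioc (Real.exp 1) (x/2)) :=
      hI1.mono_set (Set.Ioc_subset_Ioc_right (by linarith))
    have hImidB : IntegrableOn f (Ioc (x/2) (2*x)) :=
      h12.mono_set (Set.Ioc_subset_Ioc_left (by linarith))
    have hIbnd3 : IntegrableOn (fun y : ℝ => K3 * y ^ (α - 2 + ε)) (Ioi (2*x)) :=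
      (integrableOn_Ioi_rpow_of_lt (by rw [hεdef]; linarith) h2x0).const_mul K3
    have hlΔL : l ^ Δ ≤ L := by
      rw [hLdef]
      exact Real.rpow_le_rpow_of_exponent_le hl1 (by linarith)
    have hlog2 : Real.log 2 ≤ 1 := by
      have h := Real.log_lt_log two_pos h2e
      rw [Real.log_exp] at h
      exact h.le
    have h2l : Real.log (2*x) ≤ 2*l := by
      rw [Real.log_mul (by norm_num) (by linarith), hldef]
      linarith
    have hlog2xL : Real.log (2*x) ^ Δ ≤ 2^Δ * l^Δ := by
      calc Real.log (2*x) ^ Δ ≤ (2*l) ^ Δ := Real.rpow_le_rpow hlog2x h2l hΔ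
        _ = 2^Δ * l^Δ := Real.mul_rpow (by norm_num) hl0.le
    have hsplit : (∫ y, f y)
        = (∫ y in Ioc (Real.exp 1) (x/2), f y) + (∫ y in Ioc (x/2) (2*x), f y)
          + (∫ y in Ioi (2*x), f y) := by
      have e0 : (∫ y, f y) = ∫ y in Ioi (Real.exp 1), f y :=
        (setIntegral_eq_integral_of_forall_compl_eq_zero hcompl).symm
      rw [e0, ← Set.Ioc_union_Ioi_eq_Ioi (show Real.exp 1 ≤ 2*x by linarith),
        setIntegral_union (Set.Ioc_disjoint_Ioi le_rfl) measurableSet_Ioi h12 hI3,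
        ← Set.Ioc_union_Ioc_eq_Ioc (show Real.exp 1 ≤ x/2 by linarith)
          (show x/2 ≤ 2*x by linarith),
        setIntegral_union (Set.Ioc_disjoint_Ioc_of_le le_rfl) measurableSet_Ioc hImidA hImidB]
    have pieceA : ∫ y in Ioc (Real.exp 1) (x/2), f y ≤ 2/(Δ+1) * X * L := by
      have hb : IntegrableOn (fun y : ℝ => (x/2)^(α-1) * (y⁻¹ * Real.log y ^ Δ))
          (Ioc (Real.exp 1) (x/2)) :=
        (intOn_log_pow hΔ he1 (by linarith)).const_mul _
      have step1 : ∫ y in Ioc (Real.exp 1) (x/2), f y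
          ≤ ∫ y in Ioc (Real.exp 1) (x/2), (x/2)^(α-1) * (y⁻¹ * Real.log y ^ Δ) := by
        apply setIntegral_mono_on hImidA hb measurableSet_Ioc
        intro y hy
        have hy1 : Real.exp 1 < y := hy.1
        have hyx : y ≤ x/2 := hy.2
        have hy1' : (1:ℝ) ≤ y := by linarith
        rw [hfIoi y (mem_Ioi.2 hy1), abs_of_nonneg (by linarith : (0:ℝ) ≤ x - y)]
        have hstep : (x - y)^(α-1) ≤ (x/2)^(α-1) :=
          Real.rpow_le_rpow_of_nonpos (by linarith) (by linarith) (by linarith)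
        have hnn : 0 ≤ y⁻¹ * Real.log y ^ Δ := mul_nonneg (by positivity)
          (Real.rpow_nonneg (Real.log_nonneg hy1') _)
        calc y⁻¹ * Real.log y ^ Δ * (x - y)^(α-1)
            ≤ y⁻¹ * Real.log y ^ Δ * (x/2)^(α-1) := mul_le_mul_of_nonneg_left hstep hnn
          _ = (x/2)^(α-1) * (y⁻¹ * Real.log y ^ Δ) := by ring
      have step2 : ∫ y in Ioc (Real.exp 1) (x/2), (x/2)^(α-1) * (y⁻¹ * Real.log y ^ Δ)
          = (x/2)^(α-1) * ((Real.log (x/2) ^ (Δ+1) - 1) / (Δ+1)) := by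
        rw [MeasureTheory.integral_const_mul,
          ← intervalIntegral.integral_of_le (by linarith : Real.exp 1 ≤ x/2),
          ftc_log_pow hΔ he1 (by linarith), Real.log_exp, Real.one_rpow]
      have h1 : (x/2:ℝ)^(α-1) ≤ 2 * X := by
        rw [hXdef, Real.div_rpow hx0.le (by norm_num : (0:ℝ) ≤ 2), div_eq_mul_inv,
          ← Real.rpow_neg (by norm_num : (0:ℝ) ≤ 2)]
        have h2a : (2:ℝ)^(-(α-1)) ≤ 2 := by
          calc (2:ℝ)^(-(α-1)) ≤ (2:ℝ)^(1:ℝ) :=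
              Real.rpow_le_rpow_of_exponent_le one_le_two (by linarith)
            _ = 2 := Real.rpow_one 2
        calc x^(α-1) * 2^(-(α-1)) ≤ x^(α-1) * 2 :=
            mul_le_mul_of_nonneg_left h2a (Real.rpow_nonneg hx0.le _)
          _ = 2 * x^(α-1) := by ring
      have hlehalf : Real.log (x/2) ^ (Δ+1) ≤ L := by
        rw [hLdef, hldef]
        exact Real.rpow_le_rpow (Real.log_nonneg (by linarith))
          (Real.log_le_log (by linarith) (by linarith)) (by linarith)
      have h2 : (Real.log (x/2) ^ (Δ+1) - 1) / (Δ+1) ≤ L / (Δ+1) := by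
        gcongr
        linarith
      have hlhalf1 : (1:ℝ) ≤ Real.log (x/2) := by
        rw [Real.le_log_iff_exp_le (by linarith : (0:ℝ) < x/2)]
        exact hex2.le
      have hA0 : (0:ℝ) ≤ (Real.log (x/2) ^ (Δ+1) - 1) / (Δ+1) := by
        have h := Real.one_le_rpow hlhalf1 (by linarith : (0:ℝ) ≤ Δ+1)
        apply div_nonneg (by linarith) (by linarith)
      calc ∫ y in Ioc (Real.exp 1) (x/2), f y
          ≤ (x/2)^(α-1) * ((Real.log (x/2) ^ (Δ+1) - 1) / (Δ+1)) := by
            rw [← step2]; exact step1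
        _ ≤ (2*X) * (L/(Δ+1)) := mul_le_mul h1 h2 hA0 (by linarith)
        _ = 2/(Δ+1) * X * L := by ring
    have pieceB : ∫ y in Ioc (x/2) (2*x), f y ≤ 2^(Δ+2)/α * X * L := by
      have hJa0 : IntegrableOn (fun y : ℝ => (x - y) ^ (α-1)) (Ioc (x/2) x) := by
        have h := ((hrpow_int 0 (x/2)).comp_sub_left x).symm
        rw [sub_zero, show x - x/2 = x/2 by ring] at h
        rwa [intervalIntegrable_iff_integrableOn_Ioc_of_le (by linarith)] at h
      have hJa : IntegrableOn (fun y : ℝ => |x - y| ^ (α-1)) (Ioc (x/2) x) := by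
        apply hJa0.congr_fun ?_ measurableSet_Ioc
        intro y hy
        show (x - y) ^ (α-1) = |x - y| ^ (α-1)
        rw [abs_of_nonneg (by linarith [hy.2] : (0:ℝ) ≤ x - y)]
      have hJb : IntegrableOn (fun y : ℝ => |x - y| ^ (α-1)) (Ioc x (2*x)) := by
        apply hJ2.congr_fun ?_ measurableSet_Ioc
        intro y hy
        show (y - x) ^ (α-1) = |x - y| ^ (α-1)
        rw [abs_sub_comm, abs_of_nonneg (by linarith [hy.1] : (0:ℝ) ≤ y - x)]
      have vB1 : ∫ y in Ioc (x/2) x, |x - y| ^ (α-1) = (x/2)^α / α := by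
        rw [← intervalIntegral.integral_of_le (by linarith : x/2 ≤ x)]
        have hEq : Set.EqOn (fun y : ℝ => |x - y| ^ (α-1)) (fun y : ℝ => (x - y) ^ (α-1))
            (Set.uIcc (x/2) x) := by
          intro y hy
          rw [Set.uIcc_of_le (by linarith : x/2 ≤ x)] at hy
          simp only
          rw [abs_of_nonneg (by linarith [hy.2] : (0:ℝ) ≤ x - y)]
        rw [intervalIntegral.integral_congr hEq,
          intervalIntegral.integral_comp_sub_left (fun t : ℝ => t ^ (α-1)) x,
          sub_self, show x - x/2 = x/2 by ring,
          integral_rpow (Or.inl (by linarith : (-1:ℝ) < α - 1)),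
          show α - 1 + 1 = α by ring, Real.zero_rpow (ne_of_gt hα), sub_zero]
      have vB2 : ∫ y in Ioc x (2*x), |x - y| ^ (α-1) = x^α / α := by
        rw [← intervalIntegral.integral_of_le (by linarith : x ≤ 2*x)]
        have hEq : Set.EqOn (fun y : ℝ => |x - y| ^ (α-1)) (fun y : ℝ => (y - x) ^ (α-1))
            (Set.uIcc x (2*x)) := by
          intro y hy
          rw [Set.uIcc_of_le (by linarith : x ≤ 2*x)] at hy
          simp only
          rw [abs_sub_comm, abs_of_nonneg (by linarith [hy.1] : (0:ℝ) ≤ y - x)]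
        rw [intervalIntegral.integral_congr hEq,
          intervalIntegral.integral_comp_sub_right (fun t : ℝ => t ^ (α-1)) x,
          sub_self, show 2*x - x = x by ring,
          integral_rpow (Or.inl (by linarith : (-1:ℝ) < α - 1)),
          show α - 1 + 1 = α by ring, Real.zero_rpow (ne_of_gt hα), sub_zero]
      have hbint : IntegrableOn
          (fun y : ℝ => ((x/2)⁻¹ * Real.log (2*x) ^ Δ) * |x - y| ^ (α-1))
          (Ioc (x/2) (2*x)) := by
        have h := (hJa.union hJb).const_mul ((x/2)⁻¹ * Real.log (2*x) ^ Δ)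
        rwa [Set.Ioc_union_Ioc_eq_Ioc (by linarith : x/2 ≤ x) (by linarith : x ≤ 2*x)] at h
      have stepB1 : ∫ y in Ioc (x/2) (2*x), f y
          ≤ ∫ y in Ioc (x/2) (2*x), ((x/2)⁻¹ * Real.log (2*x) ^ Δ) * |x - y| ^ (α-1) := by
        apply setIntegral_mono_on hImidB hbint measurableSet_Ioc
        intro y hy
        have hy1 : x/2 < y := hy.1
        have hy2 : y ≤ 2*x := hy.2
        have hye : Real.exp 1 < y := by linarith
        have hy1' : (1:ℝ) ≤ y := by linarith
        rw [hfIoi y (mem_Ioi.2 hye)]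
        have h1 : y⁻¹ ≤ (x/2)⁻¹ := by
          apply inv_anti₀ (by linarith) hy1.le
        have h2 : Real.log y ^ Δ ≤ Real.log (2*x) ^ Δ :=
          Real.rpow_le_rpow (Real.log_nonneg hy1') (Real.log_le_log (by linarith) hy2) hΔ
        have h3 : 0 ≤ |x - y| ^ (α-1) := Real.rpow_nonneg (abs_nonneg _) _
        have h4 : 0 ≤ Real.log y ^ Δ := Real.rpow_nonneg (Real.log_nonneg hy1') _
        have h5 := mul_le_mul_of_nonneg_right
          (mul_le_mul h1 h2 h4 (by positivity)) h3
        linarith [h5]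
      have stepB2 : ∫ y in Ioc (x/2) (2*x), ((x/2)⁻¹ * Real.log (2*x) ^ Δ) * |x - y| ^ (α-1)
          = ((x/2)⁻¹ * Real.log (2*x) ^ Δ) * ((x/2)^α / α + x^α / α) := by
        rw [MeasureTheory.integral_const_mul,
          ← Set.Ioc_union_Ioc_eq_Ioc (show x/2 ≤ x by linarith) (show x ≤ 2*x by linarith),
          setIntegral_union (Set.Ioc_disjoint_Ioc_of_le le_rfl) measurableSet_Ioc hJa hJb, vB1, vB2]
      -- numeric estimate for piece B
      have hxinv : ((x:ℝ)/2)⁻¹ = 2 * x⁻¹ := by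
        rw [inv_div, div_eq_mul_inv]
      have hhalfpow : ((x:ℝ)/2)^α ≤ x^α :=
        Real.rpow_le_rpow (by positivity) (by linarith) hα.le
      have hS : ((x:ℝ)/2)^α / α + x^α / α ≤ 2 * x^α / α := by
        have hq : ((x:ℝ)/2)^α / α ≤ x^α / α := by gcongr
        have : (x:ℝ)^α / α + x^α / α = 2 * x^α / α := by ring
        linarith
      have hE : ((x:ℝ)/2)⁻¹ * Real.log (2*x) ^ Δ ≤ (2 * x⁻¹) * (2^Δ * l^Δ) := by
        rw [hxinv]
        exact mul_le_mul_of_nonneg_left hlog2xL (by positivity)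
      have hE0 : (0:ℝ) ≤ ((x:ℝ)/2)⁻¹ * Real.log (2*x) ^ Δ :=
        mul_nonneg (by positivity) (Real.rpow_nonneg hlog2x _)
      have hS0 : (0:ℝ) ≤ ((x:ℝ)/2)^α / α + x^α / α := by positivity
      have hE'0 : (0:ℝ) ≤ (2 * x⁻¹) * (2^Δ * l^Δ) := by positivity
      have hXX : x⁻¹ * x^α = X := by
        rw [hXdef, Real.rpow_sub_one (by linarith : x ≠ 0) α]
        ring
      have h22 : (2:ℝ)^(Δ+2) = 2^Δ * 4 := by
        have h2n : (2:ℝ)^(2:ℝ) = 4 := by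
          rw [show (2:ℝ) = ((2:ℕ):ℝ) from by norm_num, Real.rpow_natCast]
          norm_num
        rw [Real.rpow_add two_pos, h2n]
      calc ∫ y in Ioc (x/2) (2*x), f y
          ≤ ((x/2)⁻¹ * Real.log (2*x) ^ Δ) * ((x/2)^α / α + x^α / α) := by
            rw [← stepB2]; exact stepB1
        _ ≤ ((2 * x⁻¹) * (2^Δ * l^Δ)) * (2 * x^α / α) :=
            mul_le_mul hE hS hS0 hE'0
        _ = (2^Δ * 4 / α) * (x⁻¹ * x^α) * l^Δ := by ring
        _ = (2^Δ * 4 / α) * X * l^Δ := by rw [hXX]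
        _ ≤ (2^Δ * 4 / α) * X * L := by
            apply mul_le_mul_of_nonneg_left hlΔL
            positivity
        _ = 2^(Δ+2)/α * X * L := by rw [h22]
    have pieceC : ∫ y in Ioi (2*x), f y ≤ 2^Δ/ε * X * L := by
      have stepC1 : ∫ y in Ioi (2*x), f y ≤ ∫ y in Ioi (2*x), K3 * y ^ (α-2+ε) :=
        setIntegral_mono_on hI3 hIbnd3 measurableSet_Ioi hCpt
      have stepC2 : ∫ y in Ioi (2*x), K3 * y ^ (α-2+ε) = K3 * ((2*x)^(-ε) / ε) := by
        rw [MeasureTheory.integral_const_mul,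
          integral_Ioi_rpow_of_lt (by rw [hεdef]; linarith) h2x0,
          show α - 2 + ε + 1 = -ε by rw [hεdef]; ring, neg_div_neg_eq]
      have e1 : (2*x:ℝ)^(-ε) * (2*x)^(-ε) = (2*x)^(α-1) := by
        rw [← Real.rpow_add h2x0, show -ε + -ε = α - 1 by rw [hεdef]; ring]
      have e2 : ((2:ℝ)*x)^(α-1) = 2^(α-1) * x^(α-1) :=
        Real.mul_rpow (by norm_num) hx0.le
      have e3 : (2:ℝ)^(1-α) * 2^(α-1) = 1 := by
        rw [← Real.rpow_add two_pos, show 1-α+(α-1) = 0 by ring, Real.rpow_zero]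
      have hval : K3 * ((2*x)^(-ε) / ε) = Real.log (2*x) ^ Δ * X / ε := by
        calc K3 * ((2*x)^(-ε)/ε)
            = 2^(1-α) * Real.log (2*x) ^ Δ * ((2*x)^(-ε) * (2*x)^(-ε)) / ε := by
              rw [hK3def]; ring
          _ = 2^(1-α) * Real.log (2*x) ^ Δ * (2^(α-1) * x^(α-1)) / ε := by rw [e1, e2]
          _ = (2^(1-α) * 2^(α-1)) * (Real.log (2*x) ^ Δ * x^(α-1)) / ε := by ring
          _ = Real.log (2*x) ^ Δ * x^(α-1) / ε := by rw [e3, one_mul]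
          _ = Real.log (2*x) ^ Δ * X / ε := by rw [hXdef]
      have hlog2xle : Real.log (2*x) ^ Δ ≤ 2^Δ * L := by
        calc Real.log (2*x) ^ Δ ≤ 2^Δ * l^Δ := hlog2xL
          _ ≤ 2^Δ * L := mul_le_mul_of_nonneg_left hlΔL (by positivity)
      calc ∫ y in Ioi (2*x), f y ≤ K3 * ((2*x)^(-ε) / ε) := by rw [← stepC2]; exact stepC1
        _ = Real.log (2*x) ^ Δ * X / ε := hval
        _ ≤ (2^Δ * L) * X / ε := by gcongr
        _ = 2^Δ/ε * X * L := by ring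
    rw [hriesz, hsplit]
    calc (∫ y in Ioc (Real.exp 1) (x/2), f y) + (∫ y in Ioc (x/2) (2*x), f y)
          + (∫ y in Ioi (2*x), f y)
        ≤ 2/(Δ+1) * X * L + 2^(Δ+2)/α * X * L + 2^Δ/ε * X * L :=
          add_le_add (add_le_add pieceA pieceB) pieceC
      _ = (2/(Δ+1) + 2^(Δ+2)/α + 2^Δ/ε) * X * L := by ring
end
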